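/- Let E_K be any permutation of {0,1}^n, let h, x ∈ {0,1}^n, and let C = C_1‖C_2 = HCTR_{K,h}(x‖x) with empty tweak (so the plaintext consists of the two identical n-bit blocks P_1 = P_2 = x). Setting S = E_K^{−1}(C_2 ⊕ x) ⊕ bin_n(1), the identity C_1 ⊕ S ⊕ x = (x ⊕ C_2) · h² holds in GF(2^n). In particular, if the block-cipher key K is known, then from the single plaintext–ciphertext pair (x‖x, C) the hash key h satisfies an explicit quadratic equation over GF(2^n) and can be recovered. -/

import Mathlib

/-- Integer represented by a bit string (msb-first). -/
def bitsToNat : List Bool → ℕ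
  | [] => 0
  | b :: t => (if b then 2 ^ t.length else 0) + bitsToNat t

/-- An `n`-bit block from a bit string of length at most `n` (msb-first). -/
def blockToBV (n : ℕ) (l : List Bool) : BitVec n := BitVec.ofNat n (bitsToNat l)

/-- `pad`: append zeros on the right to get a full `n`-bit block. -/
def padBlock (n : ℕ) (l : List Bool) : BitVec n :=
  blockToBV n (l ++ List.replicate (n - l.length) false)

/-- `parse_n` followed by padding of the last block. -/
def blocksOf (n : ℕ) (Z : List Bool) : List (BitVec n) :=
  (Z.toChunks n).map (padBlock n)

/-- Number of `n`-bit blocks obtained from parsing `Z`. -/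
def numBlocks (n : ℕ) (Z : List Bool) : ℕ := (Z.toChunks n).length

/-- The HCTR hash function: `H_h(P) = h` if `P` is empty, and otherwise
`H_h(P) = P₁h^{m+1} ⊕ ⋯ ⊕ (P_m‖0^{n-r})h² ⊕ bin_n(|P|)h` (Horner evaluation),
where the equivalence `ι` identifies `{0,1}ⁿ` with `GF(2ⁿ)` (XOR = addition). -/
def hctrHash {n : ℕ} {F : Type*} [Field F] (ι : BitVec n ≃ F) (h : F)
    (P : List Bool) : F :=
  if P.isEmpty then h
  else ((blocksOf n P).map ι ++ [ι (BitVec.ofNat n P.length)]).foldl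
    (fun acc c => (acc + c) * h) 0

/-- Bits of an `n`-bit block, msb first. -/
def bvToBits (n : ℕ) (X : BitVec n) : List Bool :=
  (List.range n).map fun i => X.toNat.testBit (n - 1 - i)

/-- The internal value `CC = P₁ ⊕ H_h(P₂‖…‖P_m‖T)` of HCTR. -/
def hctrCC {n : ℕ} {F : Type*} [Field F] (ι : BitVec n ≃ F) (hk : BitVec n)
    (T P : List Bool) : BitVec n :=
  blockToBV n (P.take n) ^^^ ι.symm (hctrHash ι (ι hk) (P.drop n ++ T))

/-- HCTR encryption with block-cipher permutation `E`, hash key `hk` and tweak `T`: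
`CC = P₁ ⊕ H_h(P₂‖…‖P_m‖T)`, `S = CC ⊕ E(CC)`, `C_i = P_i ⊕ E(S ⊕ bin_n(i-1))`
(truncated to `|P_i|` bits) for `2 ≤ i ≤ m`, and `C₁ = E(CC) ⊕ H_h(C₂‖…‖C_m‖T)`. -/
def hctrEnc {n : ℕ} {F : Type*} [Field F] (ι : BitVec n ≃ F)
    (E : Equiv.Perm (BitVec n)) (hk : BitVec n) (T P : List Bool) : List Bool :=
  let CC : BitVec n := hctrCC ι hk T P
  let S : BitVec n := CC ^^^ E CC
  let Crest : List Bool :=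
    (((P.drop n).toChunks n).zipIdx.map fun p =>
      List.zipWith xor p.1 (bvToBits n (E (S ^^^ BitVec.ofNat n (p.2 + 1))))).flatten
  let C1 : BitVec n := E CC ^^^ ι.symm (hctrHash ι (ι hk) (Crest ++ T))
  bvToBits n C1 ++ Crest

lemma bitsToNat_append (A B : List Bool) :
    bitsToNat (A ++ B) = bitsToNat A * 2 ^ B.length + bitsToNat B := by
  induction A with
  | nil => simp [bitsToNat]
  | cons b t ih =>
    cases b <;> simp [bitsToNat, ih, List.length_append, pow_add] <;> ring

lemma bitsToNat_testBits (n v : ℕ) :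
    bitsToNat ((List.range n).map fun i => v.testBit (n - 1 - i)) = v % 2 ^ n := by
  induction n generalizing v with
  | zero => simp [bitsToNat, Nat.mod_one]
  | succ n ih =>
    rw [List.range_succ, List.map_append]
    have hmap : ((List.range n).map fun i => v.testBit (n + 1 - 1 - i)) =
        (List.range n).map fun i => (v / 2).testBit (n - 1 - i) := by
      apply List.map_congr_left
      intro i hi
      rw [List.mem_range] at hi
      have : n + 1 - 1 - i = (n - 1 - i) + 1 := by omega
      rw [this, Nat.testBit_succ]
    rw [hmap, bitsToNat_append, ih]
    simp only [List.map_cons, List.map_nil, List.length_cons, List.length_nil]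
    have h0 : Nat.testBit v 0 = decide (v % 2 = 1) := Nat.testBit_zero v
    have hmm : v % (2 * 2 ^ n) = v % 2 + 2 * (v / 2 % 2 ^ n) := Nat.mod_mul
    have : (2:ℕ) ^ (n + 1) = 2 * 2 ^ n := by ring
    rw [this, hmm]
    have h2 := Nat.mod_two_eq_zero_or_one v
    simp only [Nat.succ_sub_one]
    rcases h2 with h2 | h2 <;> simp [bitsToNat, h0, h2] <;> omega

lemma blockToBV_bvToBits (n : ℕ) (X : BitVec n) : blockToBV n (bvToBits n X) = X := by
  rw [blockToBV, bvToBits, bitsToNat_testBits, Nat.mod_eq_of_lt X.isLt,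
    BitVec.ofNat_toNat, BitVec.setWidth_eq]

lemma length_bvToBits (n : ℕ) (X : BitVec n) : (bvToBits n X).length = n := by
  simp [bvToBits]

lemma zipWith_map_same {α β γ δ : Type*} (op : β → γ → δ) (f : α → β) (g : α → γ)
    (l : List α) : List.zipWith op (l.map f) (l.map g) = l.map fun a => op (f a) (g a) := by
  induction l with
  | nil => rfl
  | cons a t ih => simp [ih]

lemma bvToBits_xor (n : ℕ) (a b : BitVec n) :
    List.zipWith xor (bvToBits n a) (bvToBits n b) = bvToBits n (a ^^^ b) := by
  rw [bvToBits, bvToBits, bvToBits, zipWith_map_same]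
  apply List.map_congr_left
  intro i _
  rw [BitVec.toNat_xor, Nat.testBit_xor]

lemma toChunks_go_spec {α : Type*} (n : ℕ) (xs : List α) (acc₁ : Array α)
    (acc₂ : Array (List α)) (h : xs.length + acc₁.size ≤ n) :
    List.toChunks.go n xs acc₁ acc₂ = acc₂.toList ++ [acc₁.toList ++ xs] := by
  induction xs generalizing acc₁ with
  | nil => simp [List.toChunks.go]
  | cons a t ih =>
    rw [List.toChunks.go]
    have hne : (acc₁.size == n) = false := by
      simp only [List.length_cons] at h
      simp only [beq_eq_false_iff_ne, ne_eq]
      omega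
    rw [hne]
    simp only [Bool.false_eq_true, if_false]
    rw [ih]
    · simp
    · simp only [List.length_cons] at h; simp; omega

lemma toChunks_single {α : Type*} (n : ℕ) (hn : 1 ≤ n) (l : List α) (h0 : l ≠ [])
    (hl : l.length ≤ n) : l.toChunks n = [l] := by
  obtain ⟨m, rfl⟩ : ∃ m, n = m + 1 := ⟨n - 1, by omega⟩
  obtain ⟨a, t, rfl⟩ : ∃ a t, l = a :: t := by
    cases l with | nil => exact absurd rfl h0 | cons a t => exact ⟨a, t, rfl⟩
  rw [List.toChunks]
  · rw [toChunks_go_spec]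
    · simp
    · simp only [List.length_cons] at hl; simp; omega
  · omega

lemma hctrHash_single {n : ℕ} {F : Type*} [Field F] (ι : BitVec n ≃ F) (h : F)
    (hn : 1 ≤ n) (Q : List Bool) (hQ : Q.length = n) :
    hctrHash ι h Q = ι (blockToBV n Q) * h ^ 2 + ι (BitVec.ofNat n Q.length) * h := by
  have hne : Q ≠ [] := by intro e; subst e; simp at hQ; omega
  rw [hctrHash, if_neg (by simpa [List.isEmpty_iff] using hne)]
  rw [blocksOf, toChunks_single n hn Q hne hQ.le]
  have hpad : padBlock n Q = blockToBV n Q := by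
    rw [padBlock, hQ]; simp
  simp only [List.map_cons, List.map_nil, List.cons_append, List.nil_append,
    List.foldl_cons, List.foldl_nil, hpad]
  ring

theorem main_test (n : ℕ) (hn : 1 ≤ n)
    (F : Type*) [Field F] (ι : BitVec n ≃ F)
    (hι : ∀ x y : BitVec n, ι (x ^^^ y) = ι x + ι y)
    (hone : ι 1 = 1)
    (E : Equiv.Perm (BitVec n)) (hk x : BitVec n) :
    let C := hctrEnc ι E hk [] (bvToBits n x ++ bvToBits n x)
    let C₁ := blockToBV n (C.take n)
    let C₂ := blockToBV n (C.drop n)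
    let S := E.symm (C₂ ^^^ x) ^^^ (1 : BitVec n)
    ι C₁ + ι S + ι x = (ι x + ι C₂) * ι hk ^ 2 := by
  intro C C₁ C₂ S
  -- basic facts
  have hι0 : ι 0 = 0 := by
    have h00 := hι 0 0
    rw [BitVec.xor_self] at h00
    exact (add_eq_left.mp h00.symm)
  have h2 : ∀ a : F, a + a = 0 := by
    intro a
    have := hι (ι.symm a) (ι.symm a)
    rw [BitVec.xor_self, Equiv.apply_symm_apply] at this
    rw [this.symm]
    exact hι0
  have hlen := length_bvToBits n x
  have hne : bvToBits n x ≠ [] := by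
    intro e; rw [e] at hlen; simp at hlen; omega
  have hHash : ∀ y : BitVec n, hctrHash ι (ι hk) (bvToBits n y)
      = ι y * (ι hk) ^ 2 + ι (BitVec.ofNat n n) * ι hk := by
    intro y
    rw [hctrHash_single ι (ι hk) hn _ (length_bvToBits n y), blockToBV_bvToBits,
      length_bvToBits]
  set B : F := ι (BitVec.ofNat n n) * ι hk with hB
  set CC0 : BitVec n := x ^^^ ι.symm (ι x * (ι hk) ^ 2 + B) with hCC0
  set S0 : BitVec n := CC0 ^^^ E CC0 with hS0
  set c2 : BitVec n := x ^^^ E (S0 ^^^ 1) with hc2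
  set c1 : BitVec n := E CC0 ^^^ ι.symm (ι c2 * (ι hk) ^ 2 + B) with hc1
  have htake : (bvToBits n x ++ bvToBits n x).take n = bvToBits n x := List.take_left' hlen
  have hdrop : (bvToBits n x ++ bvToBits n x).drop n = bvToBits n x := List.drop_left' hlen
  have hCC : hctrCC ι hk [] (bvToBits n x ++ bvToBits n x) = CC0 := by
    rw [hctrCC, htake, hdrop, List.append_nil, blockToBV_bvToBits, hHash x]
  have hC : C = bvToBits n c1 ++ bvToBits n c2 := by
    show hctrEnc ι E hk [] (bvToBits n x ++ bvToBits n x) = _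
    rw [hctrEnc]
    simp only [hCC, hdrop, List.append_nil]
    rw [toChunks_single n hn _ hne hlen.le]
    simp only [List.zipIdx_cons, List.zipIdx_nil, List.map_cons, List.map_nil,
      List.flatten_cons, List.flatten_nil, List.append_nil]
    rw [show BitVec.ofNat n (0 + 1) = 1 from rfl, bvToBits_xor, hHash]
  have hC1 : C₁ = c1 := by
    show blockToBV n (C.take n) = c1
    rw [hC, List.take_left' (length_bvToBits n c1), blockToBV_bvToBits]
  have hC2 : C₂ = c2 := by
    show blockToBV n (C.drop n) = c2
    rw [hC, List.drop_left' (length_bvToBits n c1), blockToBV_bvToBits]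
  have hS : S = S0 := by
    show E.symm (C₂ ^^^ x) ^^^ (1 : BitVec n) = S0
    rw [hC2, hc2]
    rw [BitVec.xor_comm x _, BitVec.xor_assoc, BitVec.xor_self, BitVec.xor_zero,
      Equiv.symm_apply_apply, BitVec.xor_assoc, BitVec.xor_self, BitVec.xor_zero]
  rw [hC1, hC2, hS, hS0, hc1, hCC0]
  rw [hι, hι, hι, hι, Equiv.apply_symm_apply, Equiv.apply_symm_apply]
  linear_combination h2 (ι (E (x ^^^ ι.symm (ι x * ι hk ^ 2 + B)))) + h2 B + h2 (ι x)

/-- Key-dependency attack on HCTR: for the encryption `C = C₁‖C₂` of `x‖x` with empty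
tweak, setting `S = E⁻¹(C₂ ⊕ x) ⊕ bin_n(1)`, the identity
`C₁ ⊕ S ⊕ x = (x ⊕ C₂)·h²` holds in `GF(2ⁿ)`; so a known block-cipher key yields an
explicit quadratic equation for the hash key `h`. -/
theorem hctr_key_dependency (n : ℕ) (hn : 1 ≤ n)
    (F : Type*) [Field F] (ι : BitVec n ≃ F)
    (hι : ∀ x y : BitVec n, ι (x ^^^ y) = ι x + ι y)
    (hone : ι 1 = 1)
    (E : Equiv.Perm (BitVec n)) (hk x : BitVec n) :
    let C := hctrEnc ι E hk [] (bvToBits n x ++ bvToBits n x)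
    let C₁ := blockToBV n (C.take n)
    let C₂ := blockToBV n (C.drop n)
    let S := E.symm (C₂ ^^^ x) ^^^ (1 : BitVec n)
    ι C₁ + ι S + ι x = (ι x + ι C₂) * ι hk ^ 2 := by
  exact main_test n hn F ι hι hone E hk x
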